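/- Every 4×4 tridiagonal row-stochastic matrix A = A(α,β,γ,δ,φ,κ) (irreducible or not) has at most two negative eigenvalues: the number of roots of the characteristic polynomial of A over ℂ, counted with multiplicity, that are negative real numbers is at most 2. Equivalently, since 1 is always an eigenvalue of A, the second largest real eigenvalue of A is nonnegative: λ₂(A) ≥ 0. -/

import Mathlib

open Polynomial Matrix in
private theorem det_fin_four' {R : Type*} [CommRing R] (M : Matrix (Fin 4) (Fin 4) R) :
    M.det =
      M 0 0 * M 1 1 * M 2 2 * M 3 3 - M 0 0 * M 1 1 * M 2 3 * M 3 2 -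
        M 0 0 * M 1 2 * M 2 1 * M 3 3 + M 0 0 * M 1 2 * M 2 3 * M 3 1 +
        M 0 0 * M 1 3 * M 2 1 * M 3 2 - M 0 0 * M 1 3 * M 2 2 * M 3 1 -
        M 0 1 * M 1 0 * M 2 2 * M 3 3 + M 0 1 * M 1 0 * M 2 3 * M 3 2 +
        M 0 1 * M 1 2 * M 2 0 * M 3 3 - M 0 1 * M 1 2 * M 2 3 * M 3 0 -
        M 0 1 * M 1 3 * M 2 0 * M 3 2 + M 0 1 * M 1 3 * M 2 2 * M 3 0 +
        M 0 2 * M 1 0 * M 2 1 * M 3 3 - M 0 2 * M 1 0 * M 2 3 * M 3 1 -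
        M 0 2 * M 1 1 * M 2 0 * M 3 3 + M 0 2 * M 1 1 * M 2 3 * M 3 0 +
        M 0 2 * M 1 3 * M 2 0 * M 3 1 - M 0 2 * M 1 3 * M 2 1 * M 3 0 -
        M 0 3 * M 1 0 * M 2 1 * M 3 2 + M 0 3 * M 1 0 * M 2 2 * M 3 1 +
        M 0 3 * M 1 1 * M 2 0 * M 3 2 - M 0 3 * M 1 1 * M 2 2 * M 3 0 -
        M 0 3 * M 1 2 * M 2 0 * M 3 1 + M 0 3 * M 1 2 * M 2 1 * M 3 0 := by
  rw [Matrix.det_succ_row_zero, Fin.sum_univ_four]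
  have h1 : (Fin.succ 2 : Fin 4) = 3 := rfl
  have h2 : (Fin.castSucc 2 : Fin 4) = 2 := rfl
  have h3 : ((3 : Fin 4) : ℕ) = 3 := rfl
  norm_num [Matrix.det_fin_three, Matrix.submatrix_apply, Fin.succAbove, Fin.lt_def, h1, h2, h3]
  ring

open Polynomial Matrix in
private lemma eval_cp' {n : Type*} [Fintype n] [DecidableEq n] (M : Matrix n n ℝ) (r : ℝ) :
    M.charpoly.eval r = (r • (1 : Matrix n n ℝ) - M).det := by
  rw [Matrix.charpoly, ← Polynomial.coe_evalRingHom, RingHom.map_det]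
  congr 1
  ext i j
  by_cases h : i = j
  · subst h; simp [charmatrix_apply_eq, Matrix.one_apply]
  · simp [charmatrix_apply_ne _ _ _ h, Matrix.one_apply_ne h]

open Polynomial Matrix in
private lemma exists_ker' (B : Matrix (Fin 2) (Fin 4) ℝ) :
    ∃ x : Fin 4 → ℝ, x ≠ 0 ∧ B *ᵥ x = 0 := by
  have h := B.mulVecLin.finrank_range_add_finrank_ker
  have h1 : Module.finrank ℝ (Fin 4 → ℝ) = 4 := by simp
  have h2 : Module.finrank ℝ (LinearMap.range B.mulVecLin) ≤ 2 := by
    have := Submodule.finrank_le (LinearMap.range B.mulVecLin)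
    simpa using this
  have hker : LinearMap.ker B.mulVecLin ≠ ⊥ := by
    intro hbot
    rw [hbot] at h
    simp [h1] at h
    omega
  obtain ⟨x, hx, hx0⟩ := Submodule.exists_mem_ne_zero_of_ne_bot hker
  exact ⟨x, hx0, hx⟩

open Polynomial Matrix in
private lemma claimA' {μ : Fin 4 → ℝ} {U : Matrix (Fin 4) (Fin 4) ℝ} (hUU : U * star U = 1)
    {l : Fin 4} (hneg : ∀ i, i ≠ l → μ i < 0) {x : Fin 4 → ℝ} (hx : x ≠ 0)
    (hperp : (x ᵥ* U) l = 0) : x ⬝ᵥ ((U * diagonal μ * star U) *ᵥ x) < 0 := by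
  set c : Fin 4 → ℝ := x ᵥ* U with hc
  have hstar : star U = Uᵀ := by
    rw [Matrix.star_eq_conjTranspose, Matrix.conjTranspose]
    ext i j; simp
  have hQ : x ⬝ᵥ ((U * diagonal μ * star U) *ᵥ x) = ∑ i, μ i * c i ^ 2 := by
    rw [← Matrix.mulVec_mulVec, ← Matrix.mulVec_mulVec, Matrix.dotProduct_mulVec,
      hstar, Matrix.mulVec_transpose, ← hc]
    simp [dotProduct, Matrix.mulVec_diagonal]
    apply Finset.sum_congr rfl
    intro i _
    ring
  rw [hQ]
  have hcne : c ≠ 0 := by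
    intro h0
    apply hx
    have : x ᵥ* (U * star U) = c ᵥ* star U := by rw [← Matrix.vecMul_vecMul, ← hc]
    rw [hUU, Matrix.vecMul_one, h0] at this
    simp [this]
  obtain ⟨i0, hi0⟩ : ∃ i0, c i0 ≠ 0 := by
    by_contra hcon
    push_neg at hcon
    exact hcne (funext hcon)
  have hi0l : i0 ≠ l := fun h => hi0 (h ▸ hperp)
  have : ∑ i, μ i * c i ^ 2 < ∑ _i : Fin 4, (0:ℝ) := by
    apply Finset.sum_lt_sum
    · intro i _
      rcases eq_or_ne i l with rfl | hil
      · simp [hperp]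
      · have := hneg i hil
        nlinarith [sq_nonneg (c i)]
    · refine ⟨i0, Finset.mem_univ _, ?_⟩
      have h1 := hneg i0 hi0l
      have : μ i0 * c i0 ^ 2 < 0 := mul_neg_of_neg_of_pos h1 (by positivity)
      linarith
  simpa using this

open Polynomial Matrix in
private lemma spectral_real' {T : Matrix (Fin 4) (Fin 4) ℝ} (hT : T.IsHermitian) :
    T = (hT.eigenvectorUnitary : Matrix (Fin 4) (Fin 4) ℝ) * diagonal hT.eigenvalues *
      star (hT.eigenvectorUnitary : Matrix (Fin 4) (Fin 4) ℝ) := by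
  have h := hT.spectral_theorem
  have h2 : (RCLike.ofReal ∘ hT.eigenvalues : Fin 4 → ℝ) = hT.eigenvalues := by
    funext i; simp
  rwa [h2] at h

open Polynomial Matrix in
private lemma det_smul_one_sub' {T : Matrix (Fin 4) (Fin 4) ℝ} (hT : T.IsHermitian) (r : ℝ) :
    (r • (1 : Matrix (Fin 4) (Fin 4) ℝ) - T).det = ∏ i, (r - hT.eigenvalues i) := by
  set U := (hT.eigenvectorUnitary : Matrix (Fin 4) (Fin 4) ℝ) with hU
  have hUU : U * star U = 1 := Matrix.mem_unitaryGroup_iff.mp hT.eigenvectorUnitary.2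
  have hU'U : star U * U = 1 := Matrix.mem_unitaryGroup_iff'.mp hT.eigenvectorUnitary.2
  have key : U * (diagonal fun i => r - hT.eigenvalues i) * star U =
      r • (1 : Matrix (Fin 4) (Fin 4) ℝ) - T := by
    have hdiag : diagonal (fun i => r - hT.eigenvalues i) =
        r • (1 : Matrix (Fin 4) (Fin 4) ℝ) - diagonal hT.eigenvalues := by
      ext i j
      rcases eq_or_ne i j with rfl | hij
      · simp [Matrix.one_apply]
      · simp [Matrix.diagonal_apply_ne _ hij, Matrix.one_apply_ne hij]
    rw [hdiag, Matrix.mul_sub, Matrix.sub_mul]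
    congr 1
    · rw [Matrix.mul_smul, Matrix.smul_mul, mul_one, hUU]
    · exact (spectral_real' hT).symm
  rw [← key, Matrix.det_mul, Matrix.det_mul, mul_comm, ← mul_assoc, ← Matrix.det_mul, hU'U,
    Matrix.det_one, one_mul, Matrix.det_diagonal]

open Polynomial Matrix in
private lemma core_lemma' {T : Matrix (Fin 4) (Fin 4) ℝ} (hT : T.IsHermitian)
    (hdiag : ∀ i, 0 ≤ T i i) (h02 : T 0 2 = 0) (h20 : T 2 0 = 0)
    (h13 : T 1 3 = 0) (h31 : T 3 1 = 0) (l : Fin 4)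
    (hneg : ∀ i, i ≠ l → hT.eigenvalues i < 0) : False := by
  set U := (hT.eigenvectorUnitary : Matrix (Fin 4) (Fin 4) ℝ) with hU
  have hUU : U * star U = 1 := Matrix.mem_unitaryGroup_iff.mp hT.eigenvectorUnitary.2
  have hspec := spectral_real' hT
  set d : Fin 4 → ℝ := ![1, -1, 1, -1] with hd
  set B : Matrix (Fin 2) (Fin 4) ℝ := Matrix.of ![fun k => U k l, fun k => d k * U k l] with hB
  obtain ⟨x, hx0, hxB⟩ := exists_ker' B
  set y : Fin 4 → ℝ := fun i => d i * x i with hy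
  have hrow0 : (x ᵥ* U) l = 0 := by
    have := congrFun hxB 0
    simp [hB, Matrix.mulVec, dotProduct] at this
    simp [Matrix.vecMul, dotProduct, Fin.sum_univ_four] at this ⊢
    linarith [this]
  have hrow1 : (y ᵥ* U) l = 0 := by
    have h1 := congrFun hxB 1
    simp [hB, Matrix.mulVec, dotProduct, Fin.sum_univ_four, hd] at h1
    simp [hy, hd, Matrix.vecMul, dotProduct, Fin.sum_univ_four]
    linarith
  have hy0 : y ≠ 0 := by
    intro h0
    apply hx0
    funext i
    have hyi : y i = 0 := congrFun h0 i
    fin_cases i <;> simp [hy, hd] at hyi <;> simpa using hyi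
  have hQx : x ⬝ᵥ (T *ᵥ x) < 0 := by
    rw [hspec]; exact claimA' hUU hneg hx0 hrow0
  have hQy : y ⬝ᵥ (T *ᵥ y) < 0 := by
    rw [hspec]; exact claimA' hUU hneg hy0 hrow1
  have hsum : x ⬝ᵥ (T *ᵥ x) + y ⬝ᵥ (T *ᵥ y) =
      2 * (T 0 0 * x 0 ^ 2 + T 1 1 * x 1 ^ 2 + T 2 2 * x 2 ^ 2 + T 3 3 * x 3 ^ 2) := by
    simp [hy, hd, dotProduct, Matrix.mulVec, Fin.sum_univ_four, h02, h20, h13, h31]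
    ring
  nlinarith [hdiag 0, hdiag 1, hdiag 2, hdiag 3, mul_nonneg (hdiag 0) (sq_nonneg (x 0)),
    mul_nonneg (hdiag 1) (sq_nonneg (x 1)), mul_nonneg (hdiag 2) (sq_nonneg (x 2)),
    mul_nonneg (hdiag 3) (sq_nonneg (x 3))]

open Polynomial Matrix in
private lemma sort3' (a b c : ℝ) :
    ∃ x y z : ℝ, ({a, b, c} : Multiset ℝ) = {x, y, z} ∧ y ≤ x ∧ z ≤ y := by
  have s01 : ∀ x y z : ℝ, ({x, y, z} : Multiset ℝ) = {y, x, z} := fun x y z =>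
    Multiset.cons_swap x y {z}
  have s12 : ∀ x y z : ℝ, ({x, y, z} : Multiset ℝ) = {x, z, y} := fun x y z =>
    congrArg (x ::ₘ ·) (Multiset.cons_swap y z 0)
  rcases le_total a b with h1 | h1 <;> rcases le_total b c with h2 | h2 <;>
    rcases le_total a c with h3 | h3
  · exact ⟨c, b, a, by rw [s01 a b c, s12 b a c, s01 b c a], h2, h1⟩
  · exact ⟨c, b, a, by rw [s01 a b c, s12 b a c, s01 b c a], h2, h1⟩
  · exact ⟨b, c, a, by rw [s01 a b c, s12 b a c], h2, h3⟩
  · exact ⟨b, a, c, by rw [s01 a b c], h1, h3⟩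
  · exact ⟨c, a, b, by rw [s12 a b c, s01 a c b], h3, h1⟩
  · exact ⟨a, c, b, by rw [s12 a b c], h3, h2⟩
  · exact ⟨c, a, b, by rw [s12 a b c, s01 a c b], h3, h1⟩
  · exact ⟨a, b, c, rfl, h1, h2⟩

/-- The 4×4 tridiagonal row-stochastic matrix with parameters α,β,γ,δ,φ,κ. -/
noncomputable def Amat (α β γ δ φ κ : ℝ) : Matrix (Fin 4) (Fin 4) ℝ :=
  !![α, 1-α, 0, 0;
     β, γ, 1-β-γ, 0;
     0, δ, φ, 1-δ-φ;
     0, 0, 1-κ, κ]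

open Polynomial Matrix in
noncomputable def Tmat (α β γ δ φ κ : ℝ) : Matrix (Fin 4) (Fin 4) ℝ :=
  !![α, Real.sqrt ((1-α)*β), 0, 0;
     Real.sqrt ((1-α)*β), γ, Real.sqrt ((1-β-γ)*δ), 0;
     0, Real.sqrt ((1-β-γ)*δ), φ, Real.sqrt ((1-δ-φ)*(1-κ));
     0, 0, Real.sqrt ((1-δ-φ)*(1-κ)), κ]

open Polynomial Matrix in
private lemma Tmat_herm (α β γ δ φ κ : ℝ) : (Tmat α β γ δ φ κ).IsHermitian := by
  rw [Matrix.IsHermitian]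
  ext i j
  fin_cases i <;> fin_cases j <;> simp [Tmat, Matrix.conjTranspose_apply, Matrix.vecHead, Matrix.vecTail]

open Polynomial Matrix in
set_option maxHeartbeats 2000000 in
private lemma det_eq_det' (α β γ δ φ κ : ℝ)
    (hα1 : α ≤ 1) (hβ : 0 ≤ β) (hδ : 0 ≤ δ) (hκ1 : κ ≤ 1)
    (hβγ : β + γ ≤ 1) (hδφ : δ + φ ≤ 1) (r : ℝ) :
    (r • (1 : Matrix (Fin 4) (Fin 4) ℝ) - Amat α β γ δ φ κ).det =
    (r • (1 : Matrix (Fin 4) (Fin 4) ℝ) - Tmat α β γ δ φ κ).det := by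
  have h1 : Real.sqrt ((1-α)*β) ^ 2 = (1-α)*β :=
    Real.sq_sqrt (mul_nonneg (by linarith) hβ)
  have h2 : Real.sqrt ((1-β-γ)*δ) ^ 2 = (1-β-γ)*δ :=
    Real.sq_sqrt (mul_nonneg (by linarith) hδ)
  have h3 : Real.sqrt ((1-δ-φ)*(1-κ)) ^ 2 = (1-δ-φ)*(1-κ) :=
    Real.sq_sqrt (mul_nonneg (by linarith) (by linarith))
  set e1 := Real.sqrt ((1-α)*β)
  set e2 := Real.sqrt ((1-β-γ)*δ)
  set e3 := Real.sqrt ((1-δ-φ)*(1-κ))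
  rw [det_fin_four', det_fin_four']
  simp [Amat, Tmat, Matrix.one_apply, Matrix.vecHead, Matrix.vecTail, Function.comp]
  linear_combination ((r-κ)*(r-φ) - e3^2) * h1 + (r-α)*(r-κ) * h2 +
    ((r-α)*(r-γ) - (1-α)*β) * h3

open Polynomial Matrix in
set_option maxHeartbeats 1000000 in
private lemma root_le_one' (α β γ δ φ κ : ℝ)
    (hα : 0 ≤ α) (hα1 : α ≤ 1) (hβ : 0 ≤ β)
    (hγ : 0 ≤ γ) (hδ : 0 ≤ δ)
    (hφ : 0 ≤ φ) (hκ : 0 ≤ κ) (hκ1 : κ ≤ 1)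
    (hβγ : β + γ ≤ 1) (hδφ : δ + φ ≤ 1)
    {r : ℝ} (hr : ((Amat α β γ δ φ κ).charpoly).IsRoot r) : r ≤ 1 := by
  have hdet : (r • (1 : Matrix (Fin 4) (Fin 4) ℝ) - Amat α β γ δ φ κ).det = 0 := by
    rw [← eval_cp']; exact hr
  obtain ⟨v, hv0, hAv⟩ := (Matrix.exists_mulVec_eq_zero_iff).mpr hdet
  have E0 : r * v 0 = α * v 0 + (1-α) * v 1 := by
    have := congrFun hAv 0
    simp [Amat, Matrix.mulVec, dotProduct, Fin.sum_univ_four, Matrix.one_apply,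
      Matrix.sub_apply, Matrix.smul_apply] at this
    linarith
  have E1 : r * v 1 = β * v 0 + γ * v 1 + (1-β-γ) * v 2 := by
    have := congrFun hAv 1
    simp [Amat, Matrix.mulVec, dotProduct, Fin.sum_univ_four, Matrix.one_apply,
      Matrix.sub_apply, Matrix.smul_apply] at this
    linarith
  have E2 : r * v 2 = δ * v 1 + φ * v 2 + (1-δ-φ) * v 3 := by
    have := congrFun hAv 2
    simp [Amat, Matrix.mulVec, dotProduct, Fin.sum_univ_four, Matrix.one_apply,
      Matrix.sub_apply, Matrix.smul_apply] at this
    linarith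
  have E3 : r * v 3 = (1-κ) * v 2 + κ * v 3 := by
    have := congrFun hAv 3
    simp [Amat, Matrix.mulVec, dotProduct, Fin.sum_univ_four, Matrix.one_apply,
      Matrix.sub_apply, Matrix.smul_apply] at this
    linarith
  by_contra hcon
  push_neg at hcon
  have hβγ' : (0:ℝ) ≤ 1 - β - γ := by linarith
  have hδφ' : (0:ℝ) ≤ 1 - δ - φ := by linarith
  obtain ⟨i, -, hi⟩ := Finset.exists_max_image Finset.univ (fun j => |v j|) ⟨0, Finset.mem_univ 0⟩
  have hb : ∀ j, |v j| ≤ |v i| := fun j => hi j (Finset.mem_univ j)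
  have hm : 0 < |v i| := by
    have hex : ∃ j, v j ≠ 0 := by
      by_contra h
      push_neg at h
      exact hv0 (funext h)
    obtain ⟨j, hj⟩ := hex
    exact lt_of_lt_of_le (abs_pos.mpr hj) (hb j)
  fin_cases i <;>
    [(have H : ∀ j, |v j| ≤ |v 0| := by simpa using hb
      have hm' : 0 < |v 0| := by simpa using hm);
     (have H : ∀ j, |v j| ≤ |v 1| := by simpa using hb
      have hm' : 0 < |v 1| := by simpa using hm);
     (have H : ∀ j, |v j| ≤ |v 2| := by simpa using hb
      have hm' : 0 < |v 2| := by simpa using hm);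
     (have H : ∀ j, |v j| ≤ |v 3| := by simpa using hb
      have hm' : 0 < |v 3| := by simpa using hm)] <;>
  obtain ⟨l0,u0⟩ := abs_le.mp (H 0) <;>
  obtain ⟨l1,u1⟩ := abs_le.mp (H 1) <;> obtain ⟨l2,u2⟩ := abs_le.mp (H 2) <;>
  obtain ⟨l3,u3⟩ := abs_le.mp (H 3)
  all_goals clear hr hdet hAv hi hb hm hv0 H
  · rcases abs_cases (v 0) with ⟨he, hs⟩ | ⟨he, hs⟩
    · nlinarith [E0, mul_nonneg (by linarith : (0:ℝ) ≤ 1-α) (by linarith : (0:ℝ) ≤ v 0 - v 1),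
        mul_pos (by linarith : (0:ℝ) < r - 1) (by linarith [hm', he] : (0:ℝ) < v 0)]
    · nlinarith [E0, mul_nonneg (by linarith : (0:ℝ) ≤ 1-α) (by linarith : (0:ℝ) ≤ v 1 - v 0),
        mul_pos (by linarith : (0:ℝ) < r - 1) (by linarith [hm', he] : (0:ℝ) < -(v 0))]
  · rcases abs_cases (v 1) with ⟨he, hs⟩ | ⟨he, hs⟩
    · nlinarith [E1, mul_nonneg hβ (by linarith : (0:ℝ) ≤ v 1 - v 0),
        mul_nonneg hβγ' (by linarith : (0:ℝ) ≤ v 1 - v 2),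
        mul_pos (by linarith : (0:ℝ) < r - 1) (by linarith [hm', he] : (0:ℝ) < v 1)]
    · nlinarith [E1, mul_nonneg hβ (by linarith : (0:ℝ) ≤ v 0 - v 1),
        mul_nonneg hβγ' (by linarith : (0:ℝ) ≤ v 2 - v 1),
        mul_pos (by linarith : (0:ℝ) < r - 1) (by linarith [hm', he] : (0:ℝ) < -(v 1))]
  · rcases abs_cases (v 2) with ⟨he, hs⟩ | ⟨he, hs⟩
    · nlinarith [E2, mul_nonneg hδ (by linarith : (0:ℝ) ≤ v 2 - v 1),
        mul_nonneg hδφ' (by linarith : (0:ℝ) ≤ v 2 - v 3),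
        mul_pos (by linarith : (0:ℝ) < r - 1) (by linarith [hm', he] : (0:ℝ) < v 2)]
    · nlinarith [E2, mul_nonneg hδ (by linarith : (0:ℝ) ≤ v 1 - v 2),
        mul_nonneg hδφ' (by linarith : (0:ℝ) ≤ v 3 - v 2),
        mul_pos (by linarith : (0:ℝ) < r - 1) (by linarith [hm', he] : (0:ℝ) < -(v 2))]
  · rcases abs_cases (v 3) with ⟨he, hs⟩ | ⟨he, hs⟩
    · nlinarith [E3, mul_nonneg (by linarith : (0:ℝ) ≤ 1-κ) (by linarith : (0:ℝ) ≤ v 3 - v 2),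
        mul_pos (by linarith : (0:ℝ) < r - 1) (by linarith [hm', he] : (0:ℝ) < v 3)]
    · nlinarith [E3, mul_nonneg (by linarith : (0:ℝ) ≤ 1-κ) (by linarith : (0:ℝ) ≤ v 2 - v 3),
        mul_pos (by linarith : (0:ℝ) < r - 1) (by linarith [hm', he] : (0:ℝ) < -(v 3))]

theorem stmt_15 (α β γ δ φ κ : ℝ)
    (hα : 0 ≤ α) (hα1 : α ≤ 1) (hβ : 0 ≤ β) (hβ1 : β ≤ 1)
    (hγ : 0 ≤ γ) (hγ1 : γ ≤ 1) (hδ : 0 ≤ δ) (hδ1 : δ ≤ 1)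
    (hφ : 0 ≤ φ) (hφ1 : φ ≤ 1) (hκ : 0 ≤ κ) (hκ1 : κ ≤ 1)
    (hβγ : β + γ ≤ 1) (hδφ : δ + φ ≤ 1) :
    ((Matrix.charpoly ((Amat α β γ δ φ κ).map (Complex.ofReal : ℝ → ℂ))).roots.filter
        (fun z : ℂ => z.im = 0 ∧ z.re < 0)).card ≤ 2 ∧
    ∃ l2 l3 l4 : ℝ,
      (Matrix.charpoly (Amat α β γ δ φ κ)).roots = {1, l2, l3, l4} ∧
      l2 ≤ 1 ∧ l3 ≤ l2 ∧ l4 ≤ l3 ∧ 0 ≤ l2 := by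
  classical
  open Polynomial Matrix in
  set T := Tmat α β γ δ φ κ with hTdef
  have hT : T.IsHermitian := Tmat_herm α β γ δ φ κ
  set μ := hT.eigenvalues with hμdef
  -- the characteristic polynomial splits with roots μ
  have hcp : (Amat α β γ δ φ κ).charpoly = ∏ i, (Polynomial.X - Polynomial.C (μ i)) := by
    apply Polynomial.funext
    intro r
    rw [eval_cp', det_eq_det' α β γ δ φ κ hα1 hβ hδ hκ1 hβγ hδφ r, det_smul_one_sub' hT,
      Polynomial.eval_prod]
    simp
    rfl
  have hroots : (Amat α β γ δ φ κ).charpoly.roots = Finset.univ.val.map μ := by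
    rw [hcp]
    have hh : ∏ i : Fin 4, (Polynomial.X - Polynomial.C (μ i)) =
        ((Finset.univ.val.map μ).map (fun a => Polynomial.X - Polynomial.C a)).prod := by
      rw [Multiset.map_map]; rfl
    rw [hh, Polynomial.roots_multiset_prod_X_sub_C]
  -- at most two negative eigenvalues
  have hneg2 : (Finset.univ.filter (fun i => μ i < 0)).card ≤ 2 := by
    by_contra hcon
    push_neg at hcon
    set s := Finset.univ.filter (fun i => μ i < 0) with hs
    have h3 : 3 ≤ s.card := hcon
    obtain ⟨a, ha⟩ := Finset.card_pos.mp (show 0 < s.card by omega)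
    have hb' : 0 < (s.erase a).card := by rw [Finset.card_erase_of_mem ha]; omega
    obtain ⟨b, hb⟩ := Finset.card_pos.mp hb'
    have hc' : 0 < ((s.erase a).erase b).card := by
      rw [Finset.card_erase_of_mem hb, Finset.card_erase_of_mem ha]; omega
    obtain ⟨c, hc⟩ := Finset.card_pos.mp hc'
    have hba : b ≠ a := (Finset.mem_erase.mp hb).1
    have hcb : c ≠ b := (Finset.mem_erase.mp hc).1
    have hca : c ≠ a := (Finset.mem_erase.mp (Finset.mem_erase.mp hc).2).1
    have hbs : b ∈ s := (Finset.mem_erase.mp hb).2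
    have hcs : c ∈ s := (Finset.mem_erase.mp (Finset.mem_erase.mp hc).2).2
    have hsub : ({a, b, c} : Finset (Fin 4)) ⊆ Finset.univ := Finset.subset_univ _
    have hcard3 : ({a, b, c} : Finset (Fin 4)).card = 3 := by
      rw [Finset.card_insert_of_notMem (by simp [hba.symm, hca.symm]),
        Finset.card_insert_of_notMem (by simp [hcb.symm]), Finset.card_singleton]
    have hsd : (Finset.univ \ ({a, b, c} : Finset (Fin 4))).card = 1 := by
      rw [Finset.card_sdiff_of_subset hsub, hcard3]
      simp
    obtain ⟨l, hl⟩ := Finset.card_eq_one.mp hsd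
    have hneg : ∀ i, i ≠ l → μ i < 0 := by
      intro i hil
      have : i ∉ Finset.univ \ ({a, b, c} : Finset (Fin 4)) := by
        rw [hl]; simp [hil]
      have : i ∈ ({a, b, c} : Finset (Fin 4)) := by
        by_contra hcc
        exact this (Finset.mem_sdiff.mpr ⟨Finset.mem_univ i, hcc⟩)
      simp only [Finset.mem_insert, Finset.mem_singleton] at this
      rcases this with rfl | rfl | rfl
      · exact (Finset.mem_filter.mp ha).2
      · exact (Finset.mem_filter.mp hbs).2
      · exact (Finset.mem_filter.mp hcs).2
    refine core_lemma' hT ?_ ?_ ?_ ?_ ?_ l hneg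
    · intro i; fin_cases i <;> simpa [hTdef, Tmat] using by assumption
    · simp [hTdef, Tmat]
    · simp [hTdef, Tmat]
    · simp [hTdef, Tmat]
    · simp [hTdef, Tmat]
  constructor
  · -- complex part
    have hmap : (Amat α β γ δ φ κ).map (Complex.ofReal : ℝ → ℂ) =
        (Amat α β γ δ φ κ).map (Complex.ofRealHom : ℝ →+* ℂ) := rfl
    have hcpC : ((Amat α β γ δ φ κ).map (Complex.ofReal : ℝ → ℂ)).charpoly =
        ∏ i, (Polynomial.X - Polynomial.C ((μ i : ℂ))) := by
      rw [hmap, Matrix.charpoly_map, hcp, Polynomial.map_prod]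
      simp
    have hrootsC : ((Amat α β γ δ φ κ).map (Complex.ofReal : ℝ → ℂ)).charpoly.roots =
        Finset.univ.val.map (fun i => (μ i : ℂ)) := by
      rw [hcpC]
      have hh : ∏ i : Fin 4, (Polynomial.X - Polynomial.C ((μ i : ℂ))) =
          ((Finset.univ.val.map (fun i => (μ i : ℂ))).map
            (fun a => Polynomial.X - Polynomial.C a)).prod := by
        rw [Multiset.map_map]; rfl
      rw [hh, Polynomial.roots_multiset_prod_X_sub_C]
    rw [hrootsC, Multiset.filter_map, Multiset.card_map]
    have : Multiset.filter ((fun z : ℂ => z.im = 0 ∧ z.re < 0) ∘ fun i => ((μ i : ℂ)))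
        Finset.univ.val = Multiset.filter (fun i => μ i < 0) Finset.univ.val := by
      apply Multiset.filter_congr
      intro i _
      simp
    rw [this]
    exact hneg2
  · -- real part
    have hmem1 : (1 : ℝ) ∈ (Amat α β γ δ φ κ).charpoly.roots := by
      rw [Polynomial.mem_roots ((Amat α β γ δ φ κ).charpoly_monic.ne_zero)]
      rw [Polynomial.IsRoot, eval_cp', det_fin_four']
      simp [Amat, Matrix.one_apply, Matrix.vecHead, Matrix.vecTail, Function.comp]
      ring
    have hcons : (Amat α β γ δ φ κ).charpoly.roots =
        1 ::ₘ ((Amat α β γ δ φ κ).charpoly.roots).erase 1 := (Multiset.cons_erase hmem1).symm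
    have hcard4 : Multiset.card ((Amat α β γ δ φ κ).charpoly.roots) = 4 := by
      rw [hroots]; simp
    have hcard3 : Multiset.card (((Amat α β γ δ φ κ).charpoly.roots).erase 1) = 3 := by
      rw [Multiset.card_erase_of_mem hmem1, hcard4]
      rfl
    obtain ⟨a, b, c, habc⟩ := Multiset.card_eq_three.mp hcard3
    obtain ⟨x, y, z, hperm, hyx, hzy⟩ := sort3' a b c
    refine ⟨x, y, z, ?_, ?_, hyx, hzy, ?_⟩
    · rw [hcons, habc, hperm]
      rfl
    · have hxmem : x ∈ (Amat α β γ δ φ κ).charpoly.roots := by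
        rw [hcons, habc, hperm]
        simp
      exact root_le_one' α β γ δ φ κ hα hα1 hβ hγ hδ hφ hκ hκ1 hβγ hδφ
        (Polynomial.isRoot_of_mem_roots hxmem)
    · by_contra hx0
      push_neg at hx0
      have hy0 : y < 0 := lt_of_le_of_lt hyx hx0
      have hz0 : z < 0 := lt_of_le_of_lt hzy hy0
      have hnot1 : ¬ ((1:ℝ) < 0) := by norm_num
      have hfc : (((Amat α β γ δ φ κ).charpoly.roots).filter (fun t : ℝ => t < 0)).card = 3 := by
        rw [hcons, habc, hperm]
        simp [Multiset.filter_cons, hnot1, hx0, hy0, hz0, Multiset.filter_singleton]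
      have hfc2 : (((Amat α β γ δ φ κ).charpoly.roots).filter (fun t : ℝ => t < 0)).card ≤ 2 := by
        rw [hroots, Multiset.filter_map, Multiset.card_map]
        exact hneg2
      omega
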